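/- Suppose Γ : Z_{2^k}^n → Z_{2^k}^n is an additive group automorphism (linear over Z_{2^k}) that is also an isometry of (Z_{2^k}^n, d), where d = d* or d = d^◇. Then Γ(x) = z ∘ π(x) for some coordinate permutation π and some z ∈ ({units of Z_{2^k}})^n, where ∘ is coordinatewise multiplication. -/

import Mathlib

/-- `wt*` on `Z_{2^k}`. -/
def wtStarK (k : ℕ) (x : ZMod (2 ^ k)) : ℕ :=
  if x = 0 then 0 else if x = (2 ^ (k - 1) : ZMod (2 ^ k)) then 2 ^ (k - 1) else 2 ^ (k - 2)

/-- The induced distance `d*`. -/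
def dStarK (k n : ℕ) (x y : Fin n → ZMod (2 ^ k)) : ℕ :=
  ∑ i, wtStarK k (y i - x i)

/-- The weight `wt^◇`. -/
def wtDia {M : ℕ} (x : ZMod M) : ℕ :=
  if x = 0 then 0 else if Odd x.val then 1 else 2

/-- The induced distance `d^◇`. -/
def dDia {M : ℕ} (n : ℕ) (x y : Fin n → ZMod M) : ℕ :=
  ∑ i, wtDia (y i - x i)

/-- Every `Z_{2^k}`-linear bijection of `Z_{2^k}^n` that is an isometry of
`(Z_{2^k}^n, d*)` or of `(Z_{2^k}^n, d^◇)` has the form `Γ(x) = z ∘ π(x)` for a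
coordinate permutation `π` and a vector `z` of units (odd elements) of `Z_{2^k}`,
where `∘` is coordinatewise multiplication. -/
theorem stmt_17 (k n : ℕ) (hk : 2 ≤ k)
    (Γ : (Fin n → ZMod (2 ^ k)) → (Fin n → ZMod (2 ^ k)))
    (hΓ_bij : Function.Bijective Γ)
    (hΓ_lin : ∀ (c : ZMod (2 ^ k)) (x y : Fin n → ZMod (2 ^ k)),
      Γ (c • x + y) = c • Γ x + Γ y)
    (hΓ_iso : (∀ x y, dStarK k n (Γ x) (Γ y) = dStarK k n x y) ∨
      (∀ x y, dDia n (Γ x) (Γ y) = dDia n x y)) :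
    ∃ (π : Equiv.Perm (Fin n)) (z : Fin n → ZMod (2 ^ k)),
      (∀ i, IsUnit (z i)) ∧ ∀ x i, Γ x i = z i * x (π i) := by
  have hMlt : 1 < 2 ^ k := Nat.one_lt_two_pow (by omega)
  haveI : Fact (1 < 2 ^ k) := ⟨hMlt⟩
  -- Γ 0 = 0
  have h0 : Γ 0 = 0 := by
    have h := hΓ_lin 1 0 0
    simp only [one_smul, add_zero] at h
    exact (add_eq_left.mp h.symm)
  -- package Γ as a linear map
  let f : (Fin n → ZMod (2 ^ k)) →ₗ[ZMod (2 ^ k)] (Fin n → ZMod (2 ^ k)) :=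
    { toFun := Γ
      map_add' := fun x y => by
        have h := hΓ_lin 1 x y; simpa using h
      map_smul' := fun c x => by
        have h := hΓ_lin c x 0; simpa [h0] using h }
  -- standard basis
  set e : Fin n → (Fin n → ZMod (2 ^ k)) :=
    fun i => fun j => if i = j then 1 else 0 with he
  have hΓsum : ∀ (x : Fin n → ZMod (2 ^ k)) (j : Fin n),
      Γ x j = ∑ i, x i * Γ (e i) j := by
    intro x j
    have hx : Γ x = ∑ i, x i • Γ (e i) := by
      conv_lhs => rw [pi_eq_sum_univ x]
      rw [show (Γ (∑ i, x i • e i)) = f (∑ i, x i • e i) from rfl, map_sum]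
      simp only [map_smul]
      rfl
    rw [hx, Finset.sum_apply]
    simp [smul_eq_mul]
  -- the unified weight function
  obtain ⟨w, hw0, hw1, hwlb, hwsum⟩ :
      ∃ w : ZMod (2 ^ k) → ℕ, w 0 = 0 ∧ 0 < w 1 ∧
        (∀ a, a ≠ 0 → w 1 ≤ w a) ∧
        (∀ v, ∑ j, w (Γ v j) = ∑ j, w (v j)) := by
    have h1ne0 : (1 : ZMod (2 ^ k)) ≠ 0 := one_ne_zero
    rcases hΓ_iso with h | h
    · have h1nep : (1 : ZMod (2 ^ k)) ≠ (2 ^ (k - 1) : ZMod (2 ^ k)) := by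
        intro hcon
        have hlt : 2 ^ (k - 1) < 2 ^ k := Nat.pow_lt_pow_right one_lt_two (by omega)
        have hval : ((2 ^ (k - 1) : ℕ) : ZMod (2 ^ k)).val = 2 ^ (k - 1) :=
          ZMod.val_natCast_of_lt hlt
        have hcast : ((2 ^ (k - 1) : ℕ) : ZMod (2 ^ k)) = (2 ^ (k - 1) : ZMod (2 ^ k)) := by
          push_cast; ring
        rw [hcast, ← hcon, ZMod.val_one] at hval
        have : 2 ≤ 2 ^ (k - 1) := by
          calc 2 = 2 ^ 1 := rfl
          _ ≤ 2 ^ (k - 1) := Nat.pow_le_pow_right (by omega) (by omega)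
        omega
      refine ⟨wtStarK k, by simp [wtStarK], ?_, ?_, ?_⟩
      · simp only [wtStarK, if_neg h1ne0, if_neg h1nep]
        positivity
      · intro a ha
        simp only [wtStarK, if_neg h1ne0, if_neg h1nep, if_neg ha]
        split
        · exact Nat.pow_le_pow_right (by omega) (by omega)
        · exact le_refl _
      · intro v
        have hv := h 0 v
        simpa [dStarK, h0] using hv
    · have hval1 : (1 : ZMod (2 ^ k)).val = 1 := ZMod.val_one _
      refine ⟨wtDia, by simp [wtDia], ?_, ?_, ?_⟩
      · simp [wtDia, h1ne0, hval1]
      · intro a ha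
        simp only [wtDia, if_neg h1ne0, if_neg ha, hval1]
        simp only [if_pos (odd_one)]
        split <;> omega
      · intro v
        have hv := h 0 v
        simpa [dDia, h0] using hv
  -- each Γ (e i) has exactly one nonzero coordinate
  have hone : ∀ i, ∃ j, Γ (e i) j ≠ 0 ∧ ∀ j', Γ (e i) j' ≠ 0 → j' = j := by
    intro i
    have hsum : ∑ j, w (Γ (e i) j) = w 1 := by
      rw [hwsum (e i)]
      simp [he, apply_ite w, hw0]
    have hne : Γ (e i) ≠ 0 := by
      intro hcon
      have hei : e i = 0 := hΓ_bij.1 (by rw [hcon, h0])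
      have := congrFun hei i
      simp [he] at this
    obtain ⟨j, hj⟩ : ∃ j, Γ (e i) j ≠ 0 := by
      by_contra hc
      push_neg at hc
      exact hne (funext fun j => hc j)
    refine ⟨j, hj, ?_⟩
    intro j' hj'
    by_contra hne'
    have hle : w (Γ (e i) j) + w (Γ (e i) j') ≤ ∑ j, w (Γ (e i) j) := by
      have hsub : ({j, j'} : Finset (Fin n)).sum (fun t => w (Γ (e i) t)) ≤
          ∑ t, w (Γ (e i) t) := Finset.sum_le_sum_of_subset (Finset.subset_univ _)
      rwa [Finset.sum_pair (fun h => hne' h.symm)] at hsub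
    have h1 := hwlb _ hj
    have h2 := hwlb _ hj'
    omega
  choose σ hσne hσuniq using hone
  have hsupp : ∀ i j, j ≠ σ i → Γ (e i) j = 0 := by
    intro i j hne
    by_contra hc
    exact hne (hσuniq i j hc)
  -- σ is surjective, hence bijective
  have hσsurj : Function.Surjective σ := by
    intro j
    by_contra hc
    push_neg at hc
    obtain ⟨x, hx⟩ := hΓ_bij.2 (e j)
    have hxj : Γ x j = 0 := by
      rw [hΓsum x j]
      apply Finset.sum_eq_zero
      intro i _
      rw [hsupp i j (fun h => hc i h.symm)]
      · ring
    rw [hx] at hxj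
    simp [he] at hxj
  have hσbij : Function.Bijective σ :=
    ⟨Finite.injective_iff_surjective.mpr hσsurj, hσsurj⟩
  let σe : Equiv.Perm (Fin n) := Equiv.ofBijective σ hσbij
  refine ⟨σe.symm, fun j => Γ (e (σe.symm j)) j, ?_, ?_⟩
  · intro j
    obtain ⟨x, hx⟩ := hΓ_bij.2 (e j)
    have hxj : Γ x j = x (σe.symm j) * Γ (e (σe.symm j)) j := by
      rw [hΓsum x j]
      refine Finset.sum_eq_single (σe.symm j) ?_ ?_
      · intro i _ hine
        rw [hsupp i j ?_]
        · ring
        · intro hcon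
          apply hine
          have : σe i = σe (σe.symm j) := by
            simp only [σe, Equiv.ofBijective_apply, Equiv.apply_symm_apply]
            rw [← hcon]
          exact σe.injective this
      · intro hni
        exact absurd (Finset.mem_univ _) hni
    rw [hx] at hxj
    have : (1 : ZMod (2 ^ k)) = x (σe.symm j) * Γ (e (σe.symm j)) j := by
      simpa [he] using hxj
    exact IsUnit.of_mul_eq_one _ (by rw [mul_comm, ← this])
  · intro x j
    rw [hΓsum x j]
    rw [Finset.sum_eq_single (σe.symm j) ?_ ?_]
    · ring
    · intro i _ hine
      rw [hsupp i j ?_]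
      · ring
      · intro hcon
        apply hine
        have : σe i = σe (σe.symm j) := by
          simp only [σe, Equiv.ofBijective_apply, Equiv.apply_symm_apply]
          rw [← hcon]
        exact σe.injective this
    · intro hni
      exact absurd (Finset.mem_univ _) hni
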